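/- arXiv:1401.5195 — 4 statements merged into one kernel-verified Lean document; each statement's English description precedes it below -/
import Mathlib

section
/- With the sequences $(v_m)$ and $(w_n)$ as in the context, if $v_{2m} = w_{2n}$ for nonnegative integers $m, n$, then $n \le m \le 2n$. -/
lemma seq_lower_aux_v (P : ℤ) (hP : 2 ≤ P) (u : ℕ → ℤ) (s a : ℤ)
    (hs : s = 1 ∨ s = -1) (h0 : |u 0| = 1)
    (h1 : s * u 1 = a) (ha : 1 ≤ a)
    (hrec : ∀ k, u (k+2) = 2*P*u (k+1) - u k) :
    ∀ k, (2*P-1)^k * a ≤ |u (k+1)| := by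
  have hs1 : |s| = 1 := by rcases hs with h|h <;> simp [h]
  have habs : ∀ k, s * u k ≤ |u k| := by
    intro k
    calc s * u k ≤ |s * u k| := le_abs_self _
      _ = |u k| := by rw [abs_mul, hs1, one_mul]
  have key : ∀ k, (2*P-1)^k * a ≤ s * u (k+1) ∧ |u k| ≤ s * u (k+1) := by
    intro k
    induction k with
    | zero =>
      refine ⟨by simpa using h1.ge, ?_⟩
      rw [h0, h1]; exact ha
    | succ k ih =>
      have hpow : (0:ℤ) < (2*P-1)^k := pow_pos (by linarith) k
      have hX : (0:ℤ) < s * u (k+1) := lt_of_lt_of_le (mul_pos hpow (by linarith)) ih.1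
      have e2 : s * u (k+2) = 2*P*(s*u (k+1)) - s * u k := by rw [hrec k]; ring
      have h4 : s * u k ≤ s * u (k+1) := (habs k).trans ih.2
      have h3 : (2*P-1) * ((2*P-1)^k * a) ≤ (2*P-1) * (s * u (k+1)) :=
        mul_le_mul_of_nonneg_left ih.1 (by linarith)
      constructor
      · have : (2*P-1)^(k+1) * a = (2*P-1) * ((2*P-1)^k * a) := by ring
        rw [this]
        nlinarith [h3, h4, e2, hX]
      · have habs2 : |u (k+1)| = s * u (k+1) := by
          rw [← abs_of_pos hX, abs_mul, hs1, one_mul]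
        rw [habs2]
        nlinarith [hX, h4, e2]
  exact fun k => le_trans (key k).1 (habs (k+1))

lemma seq_upper_aux_v (P : ℤ) (hP : 2 ≤ P) (u : ℕ → ℤ) (a : ℤ)
    (h0 : |u 0| ≤ a) (h1 : |u 1| ≤ a)
    (hrec : ∀ k, u (k+2) = 2*P*u (k+1) - u k) :
    ∀ k, |u (k+1)| ≤ (2*P+1)^k * a := by
  have ha : 0 ≤ a := le_trans (abs_nonneg _) h0
  have hsub : ∀ k, |u (k+2)| ≤ 2*P*|u (k+1)| + |u k| := by
    intro k
    rw [hrec k, sub_eq_add_neg]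
    calc |2*P*u (k+1) + -u k| ≤ |2*P*u (k+1)| + |-u k| := abs_add_le _ _
      _ = 2*P*|u (k+1)| + |u k| := by
          rw [abs_neg, abs_mul, abs_of_nonneg (by linarith : (0:ℤ) ≤ 2*P)]
  have key : ∀ k, |u (k+1)| ≤ (2*P+1)^k * a ∧ |u (k+2)| ≤ (2*P+1)^(k+1) * a := by
    intro k
    induction k with
    | zero =>
      refine ⟨by simpa using h1, ?_⟩
      have := hsub 0
      have h2 : (2*P+1)^1 * a = 2*P*a + a := by ring
      rw [h2]
      nlinarith [abs_nonneg (u 1)]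
    | succ k ih =>
      refine ⟨ih.2, ?_⟩
      have := hsub (k+1)
      have hpow : (0:ℤ) ≤ (2*P+1)^k := pow_nonneg (by linarith) k
      have e1 : (2*P+1)^(k+1+1) * a = (2*P+1)^k * ((2*P+1)^2 * a) := by ring
      have e2 : (2*P+1)^(k+1) * a = (2*P+1)^k * ((2*P+1) * a) := by ring
      rw [e1]
      rw [e2] at ih
      nlinarith [ih.1, ih.2, hpow, ha, mul_nonneg hpow ha]
  exact fun k => (key k).1




lemma nt_facts (A B C S T R : ℤ)
    (hA : 0 < A) (hAB : A < B) (hBC : B < C)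
    (hS : 0 < S) (hT : 0 < T)
    (hS2 : A * C + 1 = S ^ 2) (hT2 : B * C + 1 = T ^ 2)
    (hR2 : A * B + 1 = R ^ 2) :
    3 ≤ S ∧ T ≤ C - 1 ∧ S ≤ C - 2 ∧ S < T ∧
    (2*T + 1 ≤ (2*S-1)^2) ∧ (C + T + 1 ≤ (2*S-1)^3 * (C - S)) ∧
    (C + S + 1 ≤ (2*T-1)^2) := by
  have hC3 : 3 ≤ C := by linarith
  have hS3 : 3 ≤ S := by
    have h2 : 2 ≤ S := by nlinarith
    by_contra h
    have hSe : S = 2 := by omega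
    have hAC : A * C = 3 := by nlinarith
    have hA1 : A = 1 := by nlinarith
    have hCe : C = 3 := by nlinarith
    have hBe : B = 2 := by omega
    have hR3 : R ^ 2 = 3 := by rw [hA1, hBe] at hR2; linarith
    have h1 : R ≤ 1 := by nlinarith [sq_nonneg (R-2)]
    have h2' : -1 ≤ R := by nlinarith [sq_nonneg (R+2)]
    interval_cases R <;> omega
  have hTC : T ≤ C - 1 := by
    by_contra h
    push_neg at h
    have hTc : C ≤ T := by omega
    nlinarith
  have hAC3 : A ≤ C - 3 := by
    by_contra h
    push_neg at h
    have hAe : A = C - 2 := by omega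
    have hBe : B = C - 1 := by omega
    nlinarith
  have hSC : S ≤ C - 2 := by
    by_contra h
    push_neg at h
    have : C - 1 ≤ S := by omega
    nlinarith
  have hST : S < T := by
    by_contra h
    push_neg at h
    nlinarith
  have key1 : 2*T + 1 ≤ (2*S-1)^2 := by
    by_cases hA1 : A = 1
    · subst hA1
      nlinarith [sq_nonneg (S-1)]
    · have hA2 : 2 ≤ A := by omega
      nlinarith [mul_nonneg (by linarith : (0:ℤ) ≤ A - 2) (by linarith : (0:ℤ) ≤ C)]
  have key2 : C + T + 1 ≤ (2*S-1)^3 * (C - S) := by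
    have e1 : 5*C+5 ≤ (2*S-1)^3 := by
      nlinarith [mul_nonneg (mul_nonneg (by linarith : (0:ℤ) ≤ S - 3) hS.le) hS.le,
        mul_nonneg (by linarith : (0:ℤ) ≤ S - 3) hS.le,
        mul_nonneg (by linarith : (0:ℤ) ≤ A - 1) (by linarith : (0:ℤ) ≤ C)]
    have e2 : (5*C+5) * 2 ≤ (2*S-1)^3 * (C - S) :=
      mul_le_mul e1 (by linarith) (by norm_num) (by nlinarith)
    linarith
  have key3 : C + S + 1 ≤ (2*T-1)^2 := by
    nlinarith [mul_nonneg (by linarith : (0:ℤ) ≤ B - 2) (by linarith : (0:ℤ) ≤ C)]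
  exact ⟨hS3, hTC, hSC, hST, key1, key2, key3⟩

/-- If `v (2*m) = w (2*n)` then `n ≤ m ≤ 2*n`. -/
theorem v_eq_w_index_relation
    (A B C S T : ℤ) (lam ε δ : ℤ)
    (hA : 0 < A) (hAB : A < B) (hBC : B < C)
    (hR : ∃ R : ℤ, A * B + 1 = R ^ 2)
    (hS : 0 < S) (hT : 0 < T)
    (hS2 : A * C + 1 = S ^ 2) (hT2 : B * C + 1 = T ^ 2)
    (hlam : lam = 1 ∨ lam = -1)
    (hε : ε = 1 ∨ ε = -1) (hδ : δ = 1 ∨ δ = -1)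
    (v w : ℕ → ℤ)
    (hv0 : v 0 = lam) (hv1 : v 1 = S * lam + C * ε)
    (hv : ∀ m : ℕ, v (m + 2) = 2 * S * v (m + 1) - v m)
    (hw0 : w 0 = lam) (hw1 : w 1 = T * lam + C * δ)
    (hw : ∀ n : ℕ, w (n + 2) = 2 * T * w (n + 1) - w n)
    (m n : ℕ) (heq : v (2 * m) = w (2 * n)) :
    n ≤ m ∧ m ≤ 2 * n := by
  obtain ⟨R, hR2⟩ := hR
  obtain ⟨hS3, hTC, hSC, hST, key1, key2, key3⟩ :=
    nt_facts A B C S T R hA hAB hBC hS hT hS2 hT2 hR2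
  have hC3 : 3 ≤ C := by linarith
  -- bounds on |v 1| and |w 1|
  have hv1b : C - S ≤ |v 1| ∧ |v 1| ≤ C + S := by
    rw [hv1]
    constructor
    · rcases hlam with h|h <;> rcases hε with h'|h' <;> subst h <;> subst h' <;>
        rw [le_abs] <;> [left; right; left; right] <;> linarith
    · rw [abs_le]
      rcases hlam with h|h <;> rcases hε with h'|h' <;> subst h <;> subst h' <;>
        constructor <;> linarith
  have hw1b : C - T ≤ |w 1| ∧ |w 1| ≤ C + T := by
    rw [hw1]
    constructor
    · rcases hlam with h|h <;> rcases hδ with h'|h' <;> subst h <;> subst h' <;>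
        rw [le_abs] <;> [left; right; left; right] <;> linarith
    · rw [abs_le]
      rcases hlam with h|h <;> rcases hδ with h'|h' <;> subst h <;> subst h' <;>
        constructor <;> linarith
  have hv0abs : |v 0| = 1 := by rw [hv0]; rcases hlam with h|h <;> simp [h]
  have hw0abs : |w 0| = 1 := by rw [hw0]; rcases hlam with h|h <;> simp [h]
  -- signs
  obtain ⟨sv, hsv, hsve⟩ : ∃ s : ℤ, (s = 1 ∨ s = -1) ∧ s * v 1 = |v 1| := by
    rcases le_or_gt 0 (v 1) with h|h
    · exact ⟨1, Or.inl rfl, by rw [one_mul, abs_of_nonneg h]⟩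
    · exact ⟨-1, Or.inr rfl, by rw [abs_of_neg h]; ring⟩
  obtain ⟨sw, hsw, hswe⟩ : ∃ s : ℤ, (s = 1 ∨ s = -1) ∧ s * w 1 = |w 1| := by
    rcases le_or_gt 0 (w 1) with h|h
    · exact ⟨1, Or.inl rfl, by rw [one_mul, abs_of_nonneg h]⟩
    · exact ⟨-1, Or.inr rfl, by rw [abs_of_neg h]; ring⟩
  have Lv : ∀ k, (2*S-1)^k * |v 1| ≤ |v (k+1)| :=
    seq_lower_aux_v S (by linarith) v sv (|v 1|) hsv hv0abs hsve (by linarith [hv1b.1]) hv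
  have Uv : ∀ k, |v (k+1)| ≤ (2*S+1)^k * (C+S) :=
    seq_upper_aux_v S (by linarith) v (C+S) (by rw [hv0abs]; linarith) (le_trans hv1b.2 le_rfl) hv
  have Lw : ∀ k, (2*T-1)^k * |w 1| ≤ |w (k+1)| :=
    seq_lower_aux_v T (by linarith) w sw (|w 1|) hsw hw0abs hswe (by linarith [hw1b.1]) hw
  have Uw : ∀ k, |w (k+1)| ≤ (2*T+1)^k * (C+T) :=
    seq_upper_aux_v T (by linarith) w (C+T) (by rw [hw0abs]; linarith) (le_trans hw1b.2 le_rfl) hw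
  have habs : |v (2*m)| = |w (2*n)| := by rw [heq]
  constructor
  · -- n ≤ m
    by_contra h
    push_neg at h
    rcases Nat.eq_zero_or_pos m with hm0 | hm1
    · subst hm0
      have hn1 : 1 ≤ n := by omega
      obtain ⟨j, hj, hj1⟩ : ∃ j, 2*n = j + 1 ∧ 1 ≤ j := ⟨2*n-1, by omega, by omega⟩
      rw [hj] at habs
      have hb1 : (2*T-1)^1 * 1 ≤ (2*T-1)^j * |w 1| :=
        mul_le_mul (pow_le_pow_right₀ (by linarith) hj1) (by linarith [hw1b.1])
          (by norm_num) (pow_nonneg (by linarith) j)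
      rw [pow_one, mul_one] at hb1
      have hLwj := Lw j
      simp only [Nat.mul_zero] at habs
      rw [habs] at hv0abs
      linarith [hLwj, hb1, hv0abs.le, hv0abs.ge]
    · obtain ⟨k, hk, hk1⟩ : ∃ k, 2*m = k + 1 ∧ 1 ≤ k := ⟨2*m-1, by omega, by omega⟩
      obtain ⟨j, hj, hjk⟩ : ∃ j, 2*n = j + 1 ∧ k + 2 ≤ j := ⟨2*n-1, by omega, by omega⟩
      rw [hk, hj] at habs
      have p1 : (2*S+1)^k ≤ (2*T-1)^k := pow_le_pow_left₀ (by linarith) (by linarith) k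
      have hpowpos : (0:ℤ) < (2*T-1)^k := pow_pos (by linarith) k
      have p2 : (2*S+1)^k * (C+S) < (2*T-1)^k * (2*T-1)^2 := by
        calc (2*S+1)^k * (C+S) ≤ (2*T-1)^k * (C+S) :=
              mul_le_mul_of_nonneg_right p1 (by linarith)
          _ < (2*T-1)^k * (2*T-1)^2 :=
              mul_lt_mul_of_pos_left (by linarith) hpowpos
      have p3 : (2*T-1)^k * (2*T-1)^2 = (2*T-1)^(k+2) := (pow_add _ k 2).symm
      have p4 : (2*T-1)^(k+2) ≤ (2*T-1)^j := pow_le_pow_right₀ (by linarith) hjk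
      have p5 : (2*T-1)^j * 1 ≤ (2*T-1)^j * |w 1| :=
        mul_le_mul_of_nonneg_left (by linarith [hw1b.1]) (pow_nonneg (by linarith) j)
      rw [mul_one] at p5
      have hUvk := Uv k
      have hLwj := Lw j
      linarith [hUvk, hLwj, p2, p3, p4, p5, habs.le, habs.ge]
  · -- m ≤ 2n
    by_contra h
    push_neg at h
    rcases Nat.eq_zero_or_pos n with hn0 | hn1
    · subst hn0
      have hm1 : 1 ≤ m := by omega
      obtain ⟨k, hk, hk1⟩ : ∃ k, 2*m = k + 1 ∧ 1 ≤ k := ⟨2*m-1, by omega, by omega⟩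
      rw [hk] at habs
      have hb1 : (2*S-1)^1 * 2 ≤ (2*S-1)^k * |v 1| :=
        mul_le_mul (pow_le_pow_right₀ (by linarith) hk1) (by linarith [hv1b.1])
          (by norm_num) (pow_nonneg (by linarith) k)
      rw [pow_one] at hb1
      have hLvk := Lv k
      simp only [Nat.mul_zero] at habs
      rw [← habs] at hw0abs
      linarith [hLvk, hb1, hw0abs.le, hw0abs.ge]
    · obtain ⟨k, hk, hk1⟩ : ∃ k, 2*m = k + 1 ∧ 1 ≤ k := ⟨2*m-1, by omega, by omega⟩
      obtain ⟨j, hj, hjk⟩ : ∃ j, 2*n = j + 1 ∧ 2*j + 3 ≤ k := ⟨2*n-1, by omega, by omega⟩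
      rw [hk, hj] at habs
      have q1 : (2*S-1)^(2*j+3) * (C-S) ≤ (2*S-1)^k * (C-S) :=
        mul_le_mul_of_nonneg_right (pow_le_pow_right₀ (by linarith) hjk) (by linarith)
      have q2 : (2*S-1)^(2*j+3) * (C-S) = ((2*S-1)^2)^j * ((2*S-1)^3 * (C-S)) := by
        rw [← pow_mul, pow_add, mul_assoc]
      have q3 : (2*T+1)^j * (C+T+1) ≤ ((2*S-1)^2)^j * ((2*S-1)^3 * (C-S)) :=
        mul_le_mul (pow_le_pow_left₀ (by linarith) key1 j) key2 (by linarith)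
          (pow_nonneg (sq_nonneg _) j)
      have q4 : (2*S-1)^k * (C-S) ≤ (2*S-1)^k * |v 1| :=
        mul_le_mul_of_nonneg_left hv1b.1 (pow_nonneg (by linarith) k)
      have q5 : (2*T+1)^j * (C+T+1) = (2*T+1)^j * (C+T) + (2*T+1)^j := by ring
      have q6 : (0:ℤ) < (2*T+1)^j := pow_pos (by linarith) j
      have hLvk := Lv k
      have hUwj := Uw j
      linarith [hLvk, hUwj, q1, q2, q3, q4, q5, q6, habs.le, habs.ge]
end

section
/- With the sequences $(v_m)$ and $(w_n)$ as in the context, assume $B \ge 8$. If $v_{2m} = w_{2n}$ holds for integers $m \ge 3$ and $n \ge 2$, then $m > 0.48\, B^{-1/2} C^{1/2}$. -/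
set_option maxHeartbeats 2000000

private lemma cong_aux (A C S lam ε : ℤ) (hS2 : A * C + 1 = S ^ 2)
    (v : ℕ → ℤ) (hv0 : v 0 = lam) (hv1 : v 1 = S * lam + C * ε)
    (hv : ∀ m : ℕ, v (m + 2) = 2 * S * v (m + 1) - v m) :
    ∀ k : ℕ, ∃ x : ℤ,
      v (2 * k) = lam + 2 * C * (A * lam * (k : ℤ) ^ 2 + S * ε * (k : ℤ)) + 4 * C ^ 2 * x := by
  have hv4 : ∀ j : ℕ, v (j + 4) = (4 * S ^ 2 - 2) * v (j + 2) - v j := by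
    intro j
    have a2 := hv j
    have a3 := hv (j + 1)
    have a4 := hv (j + 2)
    rw [show j + 1 + 2 = j + 3 from by omega] at a3
    rw [show j + 2 + 2 = j + 4 from by omega, show j + 2 + 1 = j + 3 from by omega] at a4
    rw [show j + 1 + 1 = j + 2 from by omega] at a3 a2
    rw [a4, a3, a2]
    ring
  intro k
  induction k using Nat.twoStepInduction with
  | zero =>
    refine ⟨0, ?_⟩
    norm_num [hv0]
  | one =>
    refine ⟨0, ?_⟩
    have h := hv 0
    norm_num at h
    rw [show 2 * 1 = 2 from rfl, h, hv1, hv0]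
    push_cast
    linear_combination (-2) * lam * hS2
  | more k ih0 ih1 =>
    obtain ⟨x0, h0⟩ := ih0
    obtain ⟨x1, h1⟩ := ih1
    refine ⟨(4 * A * C + 2) * x1 - x0 + 2 * A * (A * lam * ((k : ℤ) + 1) ^ 2 + S * ε * ((k : ℤ) + 1)), ?_⟩
    have h4 := hv4 (2 * k)
    rw [show 2 * (k + 1) = 2 * k + 2 from by omega] at h1
    rw [show 2 * (k + 2) = 2 * k + 4 from by omega, h4, h1, h0]
    push_cast
    linear_combination (-4 * (lam + 2 * C * (A * lam * ((k : ℤ) + 1) ^ 2 + S * ε * ((k : ℤ) + 1)) + 4 * C ^ 2 * x1)) * hS2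

private lemma grow_mono (S : ℤ) (hS : 1 ≤ S) (v : ℕ → ℤ)
    (hv : ∀ m : ℕ, v (m + 2) = 2 * S * v (m + 1) - v m)
    (h0 : 1 ≤ |v 0|) (h01 : |v 0| ≤ |v 1|) :
    ∀ j, 1 ≤ |v j| ∧ |v j| ≤ |v (j + 1)| := by
  intro j
  induction j with
  | zero => exact ⟨h0, h01⟩
  | succ i ih =>
    obtain ⟨ih1, ih2⟩ := ih
    have h1 : 1 ≤ |v (i + 1)| := le_trans ih1 ih2
    refine ⟨h1, ?_⟩
    show |v (i + 1)| ≤ |v (i + 2)|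
    have habs : 2 * S * |v (i + 1)| - |v i| ≤ |v (i + 2)| := by
      calc 2 * S * |v (i + 1)| - |v i| = |2 * S * v (i + 1)| - |v i| := by
            rw [abs_mul, abs_of_nonneg (by linarith : (0:ℤ) ≤ 2 * S)]
        _ ≤ |2 * S * v (i + 1) - v i| := abs_sub_abs_le_abs_sub _ _
        _ = |v (i + 2)| := by rw [← hv i]
    nlinarith [mul_nonneg (by linarith : (0:ℤ) ≤ 2 * S - 2) (abs_nonneg (v (i + 1)))]

private lemma grow_up (S : ℤ) (hS : 1 ≤ S) (v : ℕ → ℤ)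
    (hv : ∀ m : ℕ, v (m + 2) = 2 * S * v (m + 1) - v m)
    (h0 : 1 ≤ |v 0|) (h01 : |v 0| ≤ |v 1|) :
    ∀ i, |v (i + 1)| ≤ (2 * S + 1) ^ i * |v 1| := by
  intro i
  induction i with
  | zero => simp
  | succ i ih =>
    have hmono := grow_mono S hS v hv h0 h01
    have h2 : |v i| ≤ |v (i + 1)| := (hmono i).2
    have h1 : |v (i + 2)| ≤ 2 * S * |v (i + 1)| + |v i| := by
      calc |v (i + 2)| = |2 * S * v (i + 1) - v i| := by rw [← hv i]
        _ ≤ |2 * S * v (i + 1)| + |v i| := abs_sub _ _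
        _ = 2 * S * |v (i + 1)| + |v i| := by
            rw [abs_mul, abs_of_nonneg (by linarith : (0:ℤ) ≤ 2 * S)]
    calc |v (i + 1 + 1)| ≤ (2 * S + 1) * |v (i + 1)| := by
          show |v (i + 2)| ≤ _; linarith
      _ ≤ (2 * S + 1) * ((2 * S + 1) ^ i * |v 1|) := by
          apply mul_le_mul_of_nonneg_left ih (by linarith)
      _ = (2 * S + 1) ^ (i + 1) * |v 1| := by ring

private lemma grow_low (S : ℤ) (hS : 1 ≤ S) (v : ℕ → ℤ)
    (hv : ∀ m : ℕ, v (m + 2) = 2 * S * v (m + 1) - v m)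
    (h0 : 1 ≤ |v 0|) (h01 : |v 0| ≤ |v 1|) :
    ∀ i, (2 * S - 1) ^ i * |v 1| ≤ |v (i + 1)| := by
  intro i
  induction i with
  | zero => simp
  | succ i ih =>
    have hmono := grow_mono S hS v hv h0 h01
    have h2 : |v i| ≤ |v (i + 1)| := (hmono i).2
    have h1 : 2 * S * |v (i + 1)| - |v i| ≤ |v (i + 2)| := by
      calc 2 * S * |v (i + 1)| - |v i| = |2 * S * v (i + 1)| - |v i| := by
            rw [abs_mul, abs_of_nonneg (by linarith : (0:ℤ) ≤ 2 * S)]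
        _ ≤ |2 * S * v (i + 1) - v i| := abs_sub_abs_le_abs_sub _ _
        _ = |v (i + 2)| := by rw [← hv i]
    calc (2 * S - 1) ^ (i + 1) * |v 1| = (2 * S - 1) * ((2 * S - 1) ^ i * |v 1|) := by ring
      _ ≤ (2 * S - 1) * |v (i + 1)| := by
          apply mul_le_mul_of_nonneg_left ih (by linarith)
      _ ≤ |v (i + 1 + 1)| := by show _ ≤ |v (i + 2)|; linarith

/-- If `B ≥ 8` and `v (2*m) = w (2*n)` with `m ≥ 3`, `n ≥ 2`,
then `m > 0.48 * B^(-1/2) * C^(1/2)`. -/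
theorem v_eq_w_lower_bound_m
    (A B C S T : ℤ) (lam ε δ : ℤ)
    (hA : 0 < A) (hAB : A < B) (hBC : B < C)
    (hR : ∃ R : ℤ, A * B + 1 = R ^ 2)
    (hS : 0 < S) (hT : 0 < T)
    (hS2 : A * C + 1 = S ^ 2) (hT2 : B * C + 1 = T ^ 2)
    (hlam : lam = 1 ∨ lam = -1)
    (hε : ε = 1 ∨ ε = -1) (hδ : δ = 1 ∨ δ = -1)
    (hB8 : 8 ≤ B)
    (v w : ℕ → ℤ)
    (hv0 : v 0 = lam) (hv1 : v 1 = S * lam + C * ε)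
    (hv : ∀ m : ℕ, v (m + 2) = 2 * S * v (m + 1) - v m)
    (hw0 : w 0 = lam) (hw1 : w 1 = T * lam + C * δ)
    (hw : ∀ n : ℕ, w (n + 2) = 2 * T * w (n + 1) - w n)
    (m n : ℕ) (hm : 3 ≤ m) (hn : 2 ≤ n)
    (heq : v (2 * m) = w (2 * n)) :
    (m : ℝ) > 0.48 * (B : ℝ) ^ (-(1 : ℝ) / 2) * (C : ℝ) ^ ((1 : ℝ) / 2) := by
  by_contra hcon
  push_neg at hcon
  -- ## basic facts
  have hA1 : (1:ℤ) ≤ A := hA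
  have hC0 : (0:ℤ) < C := by linarith
  have hm3 : (3:ℤ) ≤ (m:ℤ) := by exact_mod_cast hm
  have hn2 : (2:ℤ) ≤ (n:ℤ) := by exact_mod_cast hn
  have hlam2 : lam ^ 2 = 1 := by rcases hlam with h | h <;> simp [h]
  have hlamabs : |lam| = 1 := by rcases hlam with h | h <;> simp [h]
  have hεabs : |ε| = 1 := by rcases hε with h | h <;> simp [h]
  have hδabs : |δ| = 1 := by rcases hδ with h | h <;> simp [h]
  -- ## real hypothesis to integer inequality
  have hK : 10000 * (m:ℤ) ^ 2 * B ≤ 2304 * C := by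
    have hBR : (0:ℝ) < (B:ℝ) := by exact_mod_cast (by linarith : (0:ℤ) < B)
    have hCR : (0:ℝ) < (C:ℝ) := by exact_mod_cast hC0
    have hx : (B:ℝ) ^ (-(1:ℝ)/2) * (B:ℝ) ^ (-(1:ℝ)/2) = ((B:ℝ))⁻¹ := by
      rw [← Real.rpow_add hBR]
      norm_num [Real.rpow_neg_one]
    have hy : (C:ℝ) ^ ((1:ℝ)/2) * (C:ℝ) ^ ((1:ℝ)/2) = (C:ℝ) := by
      rw [← Real.rpow_add hCR]
      norm_num
    have hx0 : 0 ≤ (B:ℝ) ^ (-(1:ℝ)/2) := Real.rpow_nonneg hBR.le _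
    have hy0 : 0 ≤ (C:ℝ) ^ ((1:ℝ)/2) := Real.rpow_nonneg hCR.le _
    have hm0 : (0:ℝ) ≤ (m:ℝ) := by positivity
    have h1 : (m:ℝ) * (m:ℝ) ≤
        (0.48 * (B:ℝ) ^ (-(1:ℝ)/2) * (C:ℝ) ^ ((1:ℝ)/2)) *
        (0.48 * (B:ℝ) ^ (-(1:ℝ)/2) * (C:ℝ) ^ ((1:ℝ)/2)) :=
      mul_le_mul hcon hcon hm0 (by positivity)
    have h2 : (m:ℝ) * (m:ℝ) ≤ 0.2304 * ((B:ℝ))⁻¹ * (C:ℝ) := by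
      calc (m:ℝ) * (m:ℝ) ≤ _ := h1
        _ = 0.2304 * ((B:ℝ) ^ (-(1:ℝ)/2) * (B:ℝ) ^ (-(1:ℝ)/2)) *
            ((C:ℝ) ^ ((1:ℝ)/2) * (C:ℝ) ^ ((1:ℝ)/2)) := by ring
        _ = 0.2304 * ((B:ℝ))⁻¹ * (C:ℝ) := by rw [hx, hy]
    have hBne : (B:ℝ) ≠ 0 := ne_of_gt hBR
    have h3 : (m:ℝ) * (m:ℝ) * (B:ℝ) ≤ 0.2304 * (C:ℝ) := by
      have h4 := mul_le_mul_of_nonneg_right h2 hBR.le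
      calc (m:ℝ) * (m:ℝ) * (B:ℝ) ≤ 0.2304 * ((B:ℝ))⁻¹ * (C:ℝ) * (B:ℝ) := h4
        _ = 0.2304 * (C:ℝ) * (((B:ℝ))⁻¹ * (B:ℝ)) := by ring
        _ = 0.2304 * (C:ℝ) := by rw [inv_mul_cancel₀ hBne, mul_one]
    have h5 : (10000:ℝ) * (m:ℝ) ^ 2 * (B:ℝ) ≤ 2304 * (C:ℝ) := by
      rw [pow_two]
      linarith
    exact_mod_cast h5
  clear hcon
  have hC313 : (313:ℤ) ≤ C := by
    have h720 : (720000:ℤ) ≤ 2304 * C := by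
      nlinarith only [hK, hm3, hB8, sq_nonneg ((m:ℤ) - 3)]
    omega
  have hm2 : 10000 * (m:ℤ) ^ 2 ≤ 288 * C := by
    nlinarith only [hK, mul_nonneg (by linarith only [hB8] : (0:ℤ) ≤ B - 8) (sq_nonneg (m:ℤ))]
  -- ## S, T basic bounds
  have hST : S + 1 ≤ T := by
    have h1 : S ^ 2 < T ^ 2 := by
      nlinarith only [hS2, hT2, mul_lt_mul_of_pos_right hAB hC0]
    nlinarith only [h1, hS, hT]
  have hCB2 : B + 2 ≤ C := by
    by_contra hcc
    push_neg at hcc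
    have hCeq : C = B + 1 := by omega
    subst hCeq
    have h1 : B < T := by nlinarith only [hT2, hT, hB8]
    have h2 : T < B + 1 := by nlinarith only [hT2, hT, hB8]
    omega
  have hSC : S ≤ C - 1 := by nlinarith only [hS2, hS, hAB, hBC, hBC.le, hA]
  have hTC : T ≤ C - 1 := by nlinarith only [hT2, hT, hCB2, hB8]
  -- ## growth: n ≤ m
  have hv0abs : 1 ≤ |v 0| := by rw [hv0, hlamabs]
  have hv01 : |v 0| ≤ |v 1| := by
    rw [hv0, hlamabs, hv1]
    have hne : S * lam + C * ε ≠ 0 := by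
      rcases hlam with h | h <;> rcases hε with h' | h' <;> rw [h, h'] <;> intro hz <;> omega
    exact Int.one_le_abs hne
  have hw0abs : 1 ≤ |w 0| := by rw [hw0, hlamabs]
  have hw01 : |w 0| ≤ |w 1| := by
    rw [hw0, hlamabs, hw1]
    have hne : T * lam + C * δ ≠ 0 := by
      rcases hlam with h | h <;> rcases hδ with h' | h' <;> rw [h, h'] <;> intro hz <;> omega
    exact Int.one_le_abs hne
  have hv1le : |v 1| ≤ C + S := by
    rw [hv1]
    calc |S * lam + C * ε| ≤ |S * lam| + |C * ε| := abs_add_le _ _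
      _ = S + C := by rw [abs_mul, abs_mul, hlamabs, hεabs, mul_one, mul_one,
            abs_of_pos hS, abs_of_pos hC0]
      _ = C + S := by ring
  have hnm : n ≤ m := by
    by_contra hgt
    push_neg at hgt
    have low := grow_low T hT w hw hw0abs hw01 (2 * n - 1)
    rw [show 2 * n - 1 + 1 = 2 * n from by omega] at low
    have up := grow_up S hS v hv hv0abs hv01 (2 * m - 1)
    rw [show 2 * m - 1 + 1 = 2 * m from by omega] at up
    have e1 : |v (2 * m)| ≤ (2 * S + 1) ^ (2 * m - 1) * (C + S) :=
      le_trans up (mul_le_mul_of_nonneg_left hv1le (by positivity))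
    have e2 : ((2 * T - 1):ℤ) ^ (2 * n - 1) ≤ |w (2 * n)| := by
      calc ((2 * T - 1):ℤ) ^ (2 * n - 1) = (2 * T - 1) ^ (2 * n - 1) * 1 := by ring
        _ ≤ (2 * T - 1) ^ (2 * n - 1) * |w 1| := by
            apply mul_le_mul_of_nonneg_left (le_trans hw0abs hw01)
              (pow_nonneg (by linarith) _)
        _ ≤ |w (2 * n)| := low
    have e3 : ((2 * S + 1):ℤ) ^ (2 * m + 1) ≤ (2 * T - 1) ^ (2 * n - 1) := by
      calc ((2 * S + 1):ℤ) ^ (2 * m + 1) ≤ (2 * T - 1) ^ (2 * m + 1) := by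
            apply pow_le_pow_left₀ (by linarith) (by linarith)
        _ ≤ (2 * T - 1) ^ (2 * n - 1) := by
            apply pow_le_pow_right₀ (by linarith) (by omega)
    have e4 : ((2 * S + 1):ℤ) ^ (2 * m - 1) * (C + S) < (2 * S + 1) ^ (2 * m + 1) := by
      have hpow : ((2 * S + 1):ℤ) ^ (2 * m + 1) = (2 * S + 1) ^ (2 * m - 1) * (2 * S + 1) ^ 2 := by
        rw [← pow_add]
        congr 1
        omega
      rw [hpow]
      apply mul_lt_mul_of_pos_left ?_ (pow_pos (by linarith) _)
      nlinarith only [hS2, hSC, hS, hC0, mul_nonneg (by linarith only [hA1] : (0:ℤ) ≤ A - 1) hC0.le]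
    rw [heq] at e1
    linarith only [e1, e2, e3, e4]
  -- ## more integer bounds
  have hnmZ : (n:ℤ) ≤ (m:ℤ) := by exact_mod_cast hnm
  have hn0 : (0:ℤ) ≤ (n:ℤ) := by positivity
  have hn2m2 : (n:ℤ) ^ 2 ≤ (m:ℤ) ^ 2 := by nlinarith only [hnmZ, hn0]
  have hAm2 : 10000 * (A * (m:ℤ) ^ 2) ≤ 2304 * C := by
    nlinarith only [hK, mul_nonneg (by linarith only [hAB] : (0:ℤ) ≤ B - A) (sq_nonneg (m:ℤ))]
  have hBm2 : 10000 * (B * (m:ℤ) ^ 2) ≤ 2304 * C := by linarith only [hK]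
  have hBn2 : 10000 * (B * (n:ℤ) ^ 2) ≤ 2304 * C := by
    nlinarith only [hBm2, mul_le_mul_of_nonneg_left hn2m2 (by linarith only [hB8] : (0:ℤ) ≤ B)]
  have hTm : 10000 * (T * (m:ℤ)) ≤ 4831 * C := by
    have h1 : 10000 * C * (10000 * (m:ℤ) ^ 2 * B) ≤ 10000 * C * (2304 * C) :=
      mul_le_mul_of_nonneg_left hK (by positivity)
    have h2 : 10000 * (10000 * (m:ℤ) ^ 2) ≤ 10000 * (288 * C) := by linarith only [hm2]
    have h3 : (10000 * (T * (m:ℤ))) ^ 2 =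
        10000 * C * (10000 * (m:ℤ) ^ 2 * B) + 10000 * (10000 * (m:ℤ) ^ 2) := by
      linear_combination (-100000000 * (m:ℤ) ^ 2) * hT2
    have h4 : (10000 * (T * (m:ℤ))) ^ 2 ≤ (4831 * C) ^ 2 := by
      have h5 : 2880000 * C ≤ 298561 * C ^ 2 := by
        nlinarith only [hC313, hC0]
      nlinarith only [h1, h2, h3, h5]
    have hTm0 : (0:ℤ) ≤ 10000 * (T * (m:ℤ)) := by positivity
    have hc0 : (0:ℤ) ≤ 4831 * C := by positivity
    nlinarith only [h4, hTm0, hc0]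
  have hSm : 10000 * (S * (m:ℤ)) ≤ 4831 * C := by
    nlinarith only [hTm, mul_nonneg (by linarith only [hST] : (0:ℤ) ≤ T - S)
      (by positivity : (0:ℤ) ≤ (m:ℤ))]
  -- ## congruence: D' = 0
  obtain ⟨x, hx⟩ := cong_aux A C S lam ε hS2 v hv0 hv1 hv m
  obtain ⟨y, hy⟩ := cong_aux B C T lam δ hT2 w hw0 hw1 hw n
  have hD0 : (A * lam * (m:ℤ) ^ 2 + S * ε * (m:ℤ)) - (B * lam * (n:ℤ) ^ 2 + T * δ * (n:ℤ)) = 0 := by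
    have hzz : 2 * C * ((A * lam * (m:ℤ) ^ 2 + S * ε * (m:ℤ))
        - (B * lam * (n:ℤ) ^ 2 + T * δ * (n:ℤ)) - 2 * C * (y - x)) = 0 := by
      have h := heq
      rw [hx, hy] at h
      linear_combination h
    have h2C : (2 * C) ≠ 0 := by positivity
    have hz : (A * lam * (m:ℤ) ^ 2 + S * ε * (m:ℤ))
        - (B * lam * (n:ℤ) ^ 2 + T * δ * (n:ℤ)) = 2 * C * (y - x) := by
      rcases mul_eq_zero.mp hzz with h | h
      · exact absurd h h2C
      · linarith only [h]
    -- size bound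
    have habs : |(A * lam * (m:ℤ) ^ 2 + S * ε * (m:ℤ)) - (B * lam * (n:ℤ) ^ 2 + T * δ * (n:ℤ))|
        ≤ A * (m:ℤ) ^ 2 + S * (m:ℤ) + B * (n:ℤ) ^ 2 + T * (n:ℤ) := by
      have h1 : |A * lam * (m:ℤ) ^ 2| = A * (m:ℤ) ^ 2 := by
        rw [show A * lam * (m:ℤ) ^ 2 = A * (m:ℤ) ^ 2 * lam by ring, abs_mul, hlamabs, mul_one,
          abs_of_nonneg (by positivity)]
      have h2 : |S * ε * (m:ℤ)| = S * (m:ℤ) := by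
        rw [show S * ε * (m:ℤ) = S * (m:ℤ) * ε by ring, abs_mul, hεabs, mul_one,
          abs_of_nonneg (by positivity)]
      have h3 : |B * lam * (n:ℤ) ^ 2| = B * (n:ℤ) ^ 2 := by
        rw [show B * lam * (n:ℤ) ^ 2 = B * (n:ℤ) ^ 2 * lam by ring, abs_mul, hlamabs, mul_one,
          abs_of_nonneg (by positivity)]
      have h4 : |T * δ * (n:ℤ)| = T * (n:ℤ) := by
        rw [show T * δ * (n:ℤ) = T * (n:ℤ) * δ by ring, abs_mul, hδabs, mul_one,
          abs_of_nonneg (by positivity)]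
      calc |(A * lam * (m:ℤ) ^ 2 + S * ε * (m:ℤ)) - (B * lam * (n:ℤ) ^ 2 + T * δ * (n:ℤ))|
          ≤ |A * lam * (m:ℤ) ^ 2 + S * ε * (m:ℤ)| + |B * lam * (n:ℤ) ^ 2 + T * δ * (n:ℤ)| :=
            abs_sub _ _
        _ ≤ (|A * lam * (m:ℤ) ^ 2| + |S * ε * (m:ℤ)|) + (|B * lam * (n:ℤ) ^ 2| + |T * δ * (n:ℤ)|) :=
            add_le_add (abs_add_le _ _) (abs_add_le _ _)
        _ = A * (m:ℤ) ^ 2 + S * (m:ℤ) + B * (n:ℤ) ^ 2 + T * (n:ℤ) := by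
            rw [h1, h2, h3, h4]; ring
    have hTn : T * (n:ℤ) ≤ T * (m:ℤ) := mul_le_mul_of_nonneg_left hnmZ hT.le
    have hSmm : 10000 * (S * (m:ℤ)) ≤ 4831 * C := hSm
    have hsize : |(A * lam * (m:ℤ) ^ 2 + S * ε * (m:ℤ)) - (B * lam * (n:ℤ) ^ 2 + T * δ * (n:ℤ))|
        < 2 * C := by
      have h14 : 10000 * (A * (m:ℤ) ^ 2 + S * (m:ℤ) + B * (n:ℤ) ^ 2 + T * (n:ℤ)) ≤ 14270 * C := by
        linarith only [hAm2, hSm, hBn2, hTm, hTn]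
      linarith only [habs, hC0, h14]
    rw [hz] at hsize ⊢
    have hyx : y - x = 0 := by
      rw [abs_mul, abs_of_pos (by positivity : (0:ℤ) < 2 * C)] at hsize
      have h6 : |y - x| < 1 := by
        by_contra h7
        push_neg at h7
        nlinarith only [hsize, hC0, h7]
      exact Int.abs_lt_one_iff.mp h6
    rw [hyx]; ring
  -- ## the equation A m² + σ S m = B n² + τ T n
  have hσor : lam * ε = 1 ∨ lam * ε = -1 := by
    rcases hlam with h | h <;> rcases hε with h' | h' <;> simp [h, h']
  have hσ2 : (lam * ε) ^ 2 = 1 := by rcases hσor with h | h <;> rw [h] <;> norm_num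
  have hτ2 : (lam * δ) ^ 2 = 1 := by
    rcases hlam with h | h <;> rcases hδ with h' | h' <;> rw [h, h'] <;> norm_num
  have hV : A * (m:ℤ) ^ 2 + (lam * ε) * S * (m:ℤ) = B * (n:ℤ) ^ 2 + (lam * δ) * T * (n:ℤ) := by
    linear_combination lam * hD0 - (A * (m:ℤ) ^ 2 - B * (n:ℤ) ^ 2) * hlam2
  -- squaring identity : e * k = n² - m²
  have hTiso : (lam * δ) * T * (n:ℤ) = (A * (m:ℤ) ^ 2 - B * (n:ℤ) ^ 2) + (lam * ε) * S * (m:ℤ) := by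
    linarith [hV]
  have hsq1 : ((lam * δ) * T * (n:ℤ)) ^ 2
      = ((A * (m:ℤ) ^ 2 - B * (n:ℤ) ^ 2) + (lam * ε) * S * (m:ℤ)) ^ 2 := by rw [hTiso]
  have hsq1' : T ^ 2 * (n:ℤ) ^ 2
      = ((A * (m:ℤ) ^ 2 - B * (n:ℤ) ^ 2) + (lam * ε) * S * (m:ℤ)) ^ 2 := by
    linear_combination hsq1 - T ^ 2 * (n:ℤ) ^ 2 * hτ2
  have hek : (A * (m:ℤ) ^ 2 - B * (n:ℤ) ^ 2)
      * (C + (A * (m:ℤ) ^ 2 - B * (n:ℤ) ^ 2) + 2 * (lam * ε) * S * (m:ℤ))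
      = (n:ℤ) ^ 2 - (m:ℤ) ^ 2 := by
    linear_combination (-1) * hsq1' - S ^ 2 * (m:ℤ) ^ 2 * hσ2 - (n:ℤ) ^ 2 * hT2
      + (m:ℤ) ^ 2 * hS2
  -- ## case e = 0
  by_cases he : A * (m:ℤ) ^ 2 - B * (n:ℤ) ^ 2 = 0
  · have hSmTn : (lam * ε) * S * (m:ℤ) = (lam * δ) * T * (n:ℤ) := by
      linear_combination hV - he
    have hsq2 : ((lam * ε) * S * (m:ℤ)) ^ 2 = ((lam * δ) * T * (n:ℤ)) ^ 2 := by rw [hSmTn]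
    have hmn2 : (m:ℤ) ^ 2 = (n:ℤ) ^ 2 := by
      linear_combination hsq2 - S ^ 2 * (m:ℤ) ^ 2 * hσ2 + T ^ 2 * (n:ℤ) ^ 2 * hτ2
        + (m:ℤ) ^ 2 * hS2 - (n:ℤ) ^ 2 * hT2 - C * he
    have hmn : (m:ℤ) = (n:ℤ) := by
      have h3 : ((m:ℤ) - n) * ((m:ℤ) + n) = 0 := by linear_combination hmn2
      rcases mul_eq_zero.mp h3 with h | h
      · linarith only [h]
      · linarith only [h, hm3, hn2]
    have hzero : (A - B) * (m:ℤ) ^ 2 = 0 := by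
      linear_combination he - B * ((m:ℤ) + (n:ℤ)) * hmn
    rcases mul_eq_zero.mp hzero with h | h
    · linarith only [h, hAB]
    · nlinarith only [h, hm3]
  -- ## case e ≠ 0
  · have hkabs : |C + (A * (m:ℤ) ^ 2 - B * (n:ℤ) ^ 2) + 2 * (lam * ε) * S * (m:ℤ)| ≤ (m:ℤ) ^ 2 := by
      by_cases hk0 : C + (A * (m:ℤ) ^ 2 - B * (n:ℤ) ^ 2) + 2 * (lam * ε) * S * (m:ℤ) = 0
      · rw [hk0]; simpa using sq_nonneg ((m:ℤ))
      · have h1 : 1 ≤ |A * (m:ℤ) ^ 2 - B * (n:ℤ) ^ 2| := Int.one_le_abs he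
        calc |C + (A * (m:ℤ) ^ 2 - B * (n:ℤ) ^ 2) + 2 * (lam * ε) * S * (m:ℤ)|
            ≤ |A * (m:ℤ) ^ 2 - B * (n:ℤ) ^ 2|
              * |C + (A * (m:ℤ) ^ 2 - B * (n:ℤ) ^ 2) + 2 * (lam * ε) * S * (m:ℤ)| :=
              le_mul_of_one_le_left (abs_nonneg _) h1
          _ = |(A * (m:ℤ) ^ 2 - B * (n:ℤ) ^ 2)
              * (C + (A * (m:ℤ) ^ 2 - B * (n:ℤ) ^ 2) + 2 * (lam * ε) * S * (m:ℤ))| :=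
              (abs_mul _ _).symm
          _ = |(n:ℤ) ^ 2 - (m:ℤ) ^ 2| := by rw [hek]
          _ = (m:ℤ) ^ 2 - (n:ℤ) ^ 2 := by
              rw [abs_of_nonpos (by linarith [hn2m2])]; ring
          _ ≤ (m:ℤ) ^ 2 := by nlinarith only [hn0]
    have heabs : - (B * (n:ℤ) ^ 2) ≤ A * (m:ℤ) ^ 2 - B * (n:ℤ) ^ 2 := by
      linarith only [mul_nonneg hA.le (sq_nonneg ((m:ℤ)))]
    rcases hσor with hσ1 | hσm1
    · -- σ = 1 : impossible by size
      rw [hσ1] at hkabs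
      have hkle := (abs_le.mp hkabs).2
      have hSm0 : (0:ℤ) ≤ S * (m:ℤ) := by positivity
      have hAm0 : (0:ℤ) ≤ A * (m:ℤ) ^ 2 := by positivity
      linarith only [hkle, hBn2, hm2, hC0, hSm0, hAm0]
    · -- σ = -1
      rw [hσm1] at hkabs hek
      have hkub := (abs_le.mp hkabs).2
      have hklb := (abs_le.mp hkabs).1
      -- identity (I) and (♦)
      have hdiamond : (C - A * (m:ℤ) ^ 2 - B * (n:ℤ) ^ 2
            - (C + (A * (m:ℤ) ^ 2 - B * (n:ℤ) ^ 2) + 2 * (-1) * S * (m:ℤ))) ^ 2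
          = 4 * (m:ℤ) ^ 2 * (A * B * (n:ℤ) ^ 2
            + A * (C + (A * (m:ℤ) ^ 2 - B * (n:ℤ) ^ 2) + 2 * (-1) * S * (m:ℤ)) + 1) := by
        have hI : (S - A * (m:ℤ)) ^ 2 = A * B * (n:ℤ) ^ 2
            + A * (C + (A * (m:ℤ) ^ 2 - B * (n:ℤ) ^ 2) + 2 * (-1) * S * (m:ℤ)) + 1 := by
          linear_combination (-1) * hS2
        have hXX : C - A * (m:ℤ) ^ 2 - B * (n:ℤ) ^ 2
            - (C + (A * (m:ℤ) ^ 2 - B * (n:ℤ) ^ 2) + 2 * (-1) * S * (m:ℤ))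
            = 2 * (m:ℤ) * (S - A * (m:ℤ)) := by ring
        rw [hXX]
        linear_combination 4 * (m:ℤ) ^ 2 * hI
      -- size bounds kill it
      have hKle : 10000 * (C + (A * (m:ℤ) ^ 2 - B * (n:ℤ) ^ 2) + 2 * (-1) * S * (m:ℤ))
          ≤ 288 * C := by linarith only [hkub, hm2]
      have hXge : 5104 * C ≤ 10000 * (C - A * (m:ℤ) ^ 2 - B * (n:ℤ) ^ 2
          - (C + (A * (m:ℤ) ^ 2 - B * (n:ℤ) ^ 2) + 2 * (-1) * S * (m:ℤ))) := by
        linarith only [hAm2, hBn2, hkub, hm2]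
      have hsqlow : (5104 * C) ^ 2 ≤ (10000 * (C - A * (m:ℤ) ^ 2 - B * (n:ℤ) ^ 2
          - (C + (A * (m:ℤ) ^ 2 - B * (n:ℤ) ^ 2) + 2 * (-1) * S * (m:ℤ)))) ^ 2 := by
        have h50 : (0:ℤ) ≤ 5104 * C := by positivity
        exact pow_le_pow_left₀ h50 hXge 2
      have hexp : (10000 * (C - A * (m:ℤ) ^ 2 - B * (n:ℤ) ^ 2
          - (C + (A * (m:ℤ) ^ 2 - B * (n:ℤ) ^ 2) + 2 * (-1) * S * (m:ℤ)))) ^ 2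
          = 4 * ((10000 * (A * (m:ℤ) ^ 2)) * (10000 * (B * (n:ℤ) ^ 2)))
          + 4 * ((10000 * (A * (m:ℤ) ^ 2))
              * (10000 * (C + (A * (m:ℤ) ^ 2 - B * (n:ℤ) ^ 2) + 2 * (-1) * S * (m:ℤ))))
          + 4 * (100000000 * (m:ℤ) ^ 2) := by
        linear_combination 100000000 * hdiamond
      have hAm2nn : (0:ℤ) ≤ 10000 * (A * (m:ℤ) ^ 2) := by positivity
      have hprod1 : (10000 * (A * (m:ℤ) ^ 2)) * (10000 * (B * (n:ℤ) ^ 2))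
          ≤ (2304 * C) * (2304 * C) :=
        mul_le_mul hAm2 hBn2 (by positivity) (by positivity)
      have hprod2 : (10000 * (A * (m:ℤ) ^ 2))
          * (10000 * (C + (A * (m:ℤ) ^ 2 - B * (n:ℤ) ^ 2) + 2 * (-1) * S * (m:ℤ)))
          ≤ (2304 * C) * (288 * C) := by
        rcases le_or_gt (C + (A * (m:ℤ) ^ 2 - B * (n:ℤ) ^ 2) + 2 * (-1) * S * (m:ℤ)) 0 with hc | hc
        · calc _ ≤ (0:ℤ) := mul_nonpos_of_nonneg_of_nonpos hAm2nn (by linarith)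
            _ ≤ (2304 * C) * (288 * C) := by positivity
        · exact mul_le_mul hAm2 hKle (by linarith) (by positivity)
      have hm8 : 4 * (100000000 * (m:ℤ) ^ 2) ≤ 11520000 * C := by linarith only [hm2]
      have hCC : 313 * C ≤ C * C := by nlinarith only [hC313, hC0]
      nlinarith only [hsqlow, hexp, hprod1, hprod2, hm8, hCC, hC0]
end

section
/- Let $A,B,C$ be positive integers with $A<B<C$ and $B \ge 8$, and let $S,T$ be the positive integers with $AC+1=S^2$ and $BC+1=T^2$. Let $\lambda \in \{1,-1\}$, and let $m, n$ be integers with $m \ge 3$, $n \ge 2$, and $n \le m$. If $Am^2 + \lambda S m \equiv Bn^2 + \lambda T n \pmod{4C}$, then $m > 0.48\, B^{-1/2} C^{1/2}$. -/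
set_option maxHeartbeats 1000000 in
/-- Congruence condition implies `m > 0.48 * B^(-1/2) * C^(1/2)`. -/
theorem congruence_lower_bound_m
    (A B C S T lam m n : ℤ)
    (hA : 0 < A) (hAB : A < B) (hBC : B < C) (hB8 : 8 ≤ B)
    (hS : 0 < S) (hT : 0 < T)
    (hS2 : A * C + 1 = S ^ 2) (hT2 : B * C + 1 = T ^ 2)
    (hlam : lam = 1 ∨ lam = -1)
    (hm : 3 ≤ m) (hn : 2 ≤ n) (hnm : n ≤ m)
    (hcong : A * m ^ 2 + lam * S * m ≡ B * n ^ 2 + lam * T * n [ZMOD (4 * C)]) :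
    (m : ℝ) > 0.48 * (B : ℝ) ^ (-(1 : ℝ) / 2) * (C : ℝ) ^ ((1 : ℝ) / 2) := by
  have hC0 : (0:ℤ) < C := by linarith
  have hC9 : (9:ℤ) ≤ C := by linarith
  have hST : S < T := by nlinarith
  have hm0 : (0:ℤ) < m := by linarith
  have hn0 : (0:ℤ) < n := by linarith
  have hn2m2 : n ^ 2 ≤ m ^ 2 := by nlinarith
  have hlam2 : lam ^ 2 = 1 := by rcases hlam with h | h <;> simp [h]
  have hdvd : (4 * C) ∣ (B * n ^ 2 + lam * T * n) - (A * m ^ 2 + lam * S * m) := hcong.dvd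
  -- key integer inequality
  have hkey : 2304 * C < 10000 * B * m ^ 2 := by
    by_cases hD : (B * n ^ 2 + lam * T * n) - (A * m ^ 2 + lam * S * m) = 0
    · -- D = 0 case
      have hident : (B * n ^ 2 - A * m ^ 2) * (C + lam * (T * n + S * m)) = m ^ 2 - n ^ 2 := by
        have hD' : A * m ^ 2 + lam * S * m = B * n ^ 2 + lam * T * n := by linarith
        linear_combination n ^ 2 * hT2 - m ^ 2 * hS2 - lam * (T * n + S * m) * hD' +
          (S ^ 2 * m ^ 2 - T ^ 2 * n ^ 2) * hlam2
      have hE : B * n ^ 2 - A * m ^ 2 ≠ 0 := by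
        intro hE0
        rw [hE0, zero_mul] at hident
        have h6 : (m - n) * (m + n) = 0 := by linear_combination -hident
        rcases mul_eq_zero.mp h6 with h7 | h7
        · have hmn : m = n := by linarith
          rw [hmn] at hE0
          nlinarith [mul_pos (sub_pos.mpr hAB) (pow_pos hn0 2)]
        · linarith
      have hXle : |C + lam * (T * n + S * m)| ≤ m ^ 2 - n ^ 2 := by
        calc |C + lam * (T * n + S * m)| = 1 * |C + lam * (T * n + S * m)| := (one_mul _).symm
          _ ≤ |B * n ^ 2 - A * m ^ 2| * |C + lam * (T * n + S * m)| :=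
              mul_le_mul_of_nonneg_right (Int.one_le_abs hE) (abs_nonneg _)
          _ = |(B * n ^ 2 - A * m ^ 2) * (C + lam * (T * n + S * m))| := (abs_mul _ _).symm
          _ = |m ^ 2 - n ^ 2| := by rw [hident]
          _ = m ^ 2 - n ^ 2 := abs_of_nonneg (by linarith)
      have hXle' : C + lam * (T * n + S * m) ≤ m ^ 2 - n ^ 2 :=
        le_trans (le_abs_self _) hXle
      rcases hlam with h1 | h1
      · -- lam = 1 : C < m^2
        rw [h1] at hXle'
        have hCm : C < m ^ 2 := by
          nlinarith [mul_pos hT hn0, mul_pos hS hm0]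
        nlinarith [mul_le_mul_of_nonneg_right hB8 (sq_nonneg m)]
      · -- lam = -1
        rw [h1] at hXle'
        have hCle : C ≤ S * m + T * n + (m ^ 2 - n ^ 2) := by linarith
        by_cases hTmn : T < m + n
        · -- T < m + n, hence 2m > T, so m is big
          have hT2m : T ≤ 2 * m - 1 := by linarith
          have hTsq : T ^ 2 ≤ (2 * m - 1) ^ 2 := pow_le_pow_left₀ hT.le hT2m 2
          have h4m : B * C + 2 ≤ 4 * m ^ 2 := by nlinarith
          nlinarith [mul_le_mul_of_nonneg_left h4m (by linarith : (0:ℤ) ≤ 2500 * B),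
            mul_le_mul_of_nonneg_right hB8 (mul_pos (by linarith : (0:ℤ) < B) hC0).le,
            mul_le_mul_of_nonneg_right hB8 hC0.le, mul_pos (by linarith : (0:ℤ) < B) hC0]
        · push_neg at hTmn
          have hC2T : C ≤ 2 * T * m := by
            nlinarith [mul_nonneg (by linarith : (0:ℤ) ≤ T - (m + n))
              (by linarith : (0:ℤ) ≤ m - n),
              mul_le_mul_of_nonneg_right hST.le hm0.le]
          have hCsq' : C ^ 2 ≤ 4 * (B * C + 1) * m ^ 2 := by
            calc C ^ 2 ≤ (2 * T * m) ^ 2 := pow_le_pow_left₀ hC0.le hC2T 2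
              _ = 4 * T ^ 2 * m ^ 2 := by ring
              _ = 4 * (B * C + 1) * m ^ 2 := by rw [← hT2]
          by_contra hcnt
          push_neg at hcnt
          nlinarith [mul_le_mul_of_nonneg_left hcnt (by positivity : (0:ℤ) ≤ 4 * (B * C + 1)),
            mul_le_mul_of_nonneg_left hCsq' (by linarith : (0:ℤ) ≤ 10000 * B),
            mul_le_mul_of_nonneg_right hB8 (sq_nonneg C),
            mul_nonneg (by linarith : (0:ℤ) ≤ C - 9) hC0.le]
    · -- D ≠ 0 case : 4C ≤ |D|
      have h4C : 4 * C ≤ |(B * n ^ 2 + lam * T * n) - (A * m ^ 2 + lam * S * m)| :=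
        Int.le_of_dvd (abs_pos.mpr hD) ((dvd_abs _ _).mpr hdvd)
      have habs : |(B * n ^ 2 + lam * T * n) - (A * m ^ 2 + lam * S * m)| ≤
          2 * B * m ^ 2 + 2 * T * m := by
        have k1 : (0:ℤ) ≤ (B - A) * m ^ 2 := mul_nonneg (by linarith) (sq_nonneg m)
        have k2 : (0:ℤ) ≤ (T - S) * m := mul_nonneg (by linarith) hm0.le
        have k3 : (0:ℤ) ≤ B * (m ^ 2 - n ^ 2) := mul_nonneg (by linarith) (by linarith)
        have k4 : (0:ℤ) ≤ T * (m - n) := mul_nonneg hT.le (by linarith)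
        have k5 : (0:ℤ) < A * m ^ 2 := mul_pos hA (pow_pos hm0 2)
        have k6 : (0:ℤ) < S * m := mul_pos hS hm0
        have k7 : (0:ℤ) < B * n ^ 2 := mul_pos (by linarith) (pow_pos hn0 2)
        have k8 : (0:ℤ) < T * n := mul_pos hT hn0
        rcases hlam with h1 | h1 <;> rw [h1] <;>
          refine abs_le.mpr ⟨by nlinarith, by nlinarith⟩
      have hcase : 2 * C ≤ B * m ^ 2 + T * m := by linarith
      by_contra hcnt
      push_neg at hcnt
      have h1 : 0 ≤ 2 * C - B * m ^ 2 := by linarith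
      have h3 : (2 * C - B * m ^ 2) ^ 2 ≤ (B * C + 1) * m ^ 2 := by
        calc (2 * C - B * m ^ 2) ^ 2 ≤ (T * m) ^ 2 :=
              pow_le_pow_left₀ h1 (by linarith) 2
          _ = T ^ 2 * m ^ 2 := by ring
          _ = (B * C + 1) * m ^ 2 := by rw [← hT2]
      nlinarith [mul_le_mul_of_nonneg_left hcnt hC0.le, sq_nonneg (B * m ^ 2),
        mul_le_mul_of_nonneg_right hB8 (sq_nonneg m),
        mul_nonneg (by linarith : (0:ℤ) ≤ C - 9) hC0.le]
  -- pass to the reals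
  have hBR : (0:ℝ) < (B:ℝ) := by exact_mod_cast (by linarith : (0:ℤ) < B)
  have hCR : (0:ℝ) < (C:ℝ) := by exact_mod_cast hC0
  have hmR : (0:ℝ) < (m:ℝ) := by exact_mod_cast hm0
  have hkeyR : 2304 * (C:ℝ) < 10000 * (B:ℝ) * (m:ℝ) ^ 2 := by exact_mod_cast hkey
  have e1 : (B : ℝ) ^ (-(1 : ℝ) / 2) = (Real.sqrt B)⁻¹ := by
    rw [Real.sqrt_eq_rpow, ← Real.rpow_neg hBR.le]
    norm_num
  have e2 : (C : ℝ) ^ ((1 : ℝ) / 2) = Real.sqrt C := (Real.sqrt_eq_rpow _).symm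
  rw [gt_iff_lt, e1, e2]
  have hsB : 0 < Real.sqrt B := Real.sqrt_pos.mpr hBR
  have hsC : 0 < Real.sqrt C := Real.sqrt_pos.mpr hCR
  have hmain : 0.48 * Real.sqrt C < (m:ℝ) * Real.sqrt B := by
    have hsq : (0.48 * Real.sqrt C) ^ 2 < ((m:ℝ) * Real.sqrt B) ^ 2 := by
      have hb := Real.sq_sqrt hBR.le
      have hc := Real.sq_sqrt hCR.le
      nlinarith
    exact lt_of_pow_lt_pow_left₀ 2 (by positivity) hsq
  calc 0.48 * (Real.sqrt B)⁻¹ * Real.sqrt C = (0.48 * Real.sqrt C) * (Real.sqrt B)⁻¹ := by ring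
    _ < ((m:ℝ) * Real.sqrt B) * (Real.sqrt B)⁻¹ := by
        exact mul_lt_mul_of_pos_right hmain (by positivity)
    _ = (m:ℝ) := by field_simp
end

section
/- Let $A,B,C$ be positive integers with $A<B<C$ and $B \ge 8$, and let $S,T$ be the positive integers with $AC+1=S^2$ and $BC+1=T^2$. Let $\lambda \in \{1,-1\}$, and let $m, n$ be positive integers with $n \le m$ and $m \le 0.48\, B^{-1/2} C^{1/2}$. If $Am^2 + \lambda S m \equiv Bn^2 + \lambda T n \pmod{4C}$, then $Am^2 + \lambda S m = Bn^2 + \lambda T n$, i.e. $Am^2 - Bn^2 = \lambda(Tn - Sm)$. -/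
set_option maxHeartbeats 1000000


/-- If `m ≤ 0.48 * B^(-1/2) * C^(1/2)`, then the congruence is an equality. -/
theorem congruence_to_equality
    (A B C S T lam m n : ℤ)
    (hA : 0 < A) (hAB : A < B) (hBC : B < C) (hB8 : 8 ≤ B)
    (hS : 0 < S) (hT : 0 < T)
    (hS2 : A * C + 1 = S ^ 2) (hT2 : B * C + 1 = T ^ 2)
    (hlam : lam = 1 ∨ lam = -1)
    (hm : 0 < m) (hn : 0 < n) (hnm : n ≤ m)
    (hub : (m : ℝ) ≤ 0.48 * (B : ℝ) ^ (-(1 : ℝ) / 2) * (C : ℝ) ^ ((1 : ℝ) / 2))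
    (hcong : A * m ^ 2 + lam * S * m ≡ B * n ^ 2 + lam * T * n [ZMOD (4 * C)]) :
    A * m ^ 2 + lam * S * m = B * n ^ 2 + lam * T * n ∧
      A * m ^ 2 - B * n ^ 2 = lam * (T * n - S * m) := by
  have hB : (0:ℤ) < B := lt_trans hA hAB
  have hC : (0:ℤ) < C := lt_trans hB hBC
  have hBR : (0:ℝ) < (B:ℝ) := by exact_mod_cast hB
  have hCR : (0:ℝ) < (C:ℝ) := by exact_mod_cast hC
  have hmR : (0:ℝ) < (m:ℝ) := by exact_mod_cast hm
  -- key bound: 4*B*m^2 ≤ C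
  have hx2 : ((B:ℝ) ^ (-(1 : ℝ) / 2)) ^ 2 = (B:ℝ)⁻¹ := by
    rw [← Real.rpow_natCast ((B:ℝ) ^ (-(1 : ℝ) / 2)) 2, ← Real.rpow_mul hBR.le,
      show (-(1:ℝ) / 2 * (2:ℕ)) = -1 by push_cast; ring, Real.rpow_neg_one]
  have hy2 : ((C:ℝ) ^ ((1 : ℝ) / 2)) ^ 2 = (C:ℝ) := by
    rw [← Real.rpow_natCast ((C:ℝ) ^ ((1 : ℝ) / 2)) 2, ← Real.rpow_mul hCR.le,
      show ((1:ℝ) / 2 * (2:ℕ)) = 1 by push_cast; ring, Real.rpow_one]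
  have hm2 : (m:ℝ) ^ 2 ≤ (0.48 * (B : ℝ) ^ (-(1 : ℝ) / 2) * (C : ℝ) ^ ((1 : ℝ) / 2)) ^ 2 :=
    pow_le_pow_left₀ hmR.le hub 2
  have hm2' : (m:ℝ) ^ 2 * (B:ℝ) ≤ 0.2304 * (C:ℝ) := by
    rw [mul_pow, mul_pow, hx2, hy2] at hm2
    have h1 := mul_le_mul_of_nonneg_right hm2 hBR.le
    have h2 : ((B:ℝ))⁻¹ * (B:ℝ) = 1 := inv_mul_cancel₀ hBR.ne'
    calc (m:ℝ)^2 * (B:ℝ) ≤ 0.48 ^ 2 * (B:ℝ)⁻¹ * (C:ℝ) * (B:ℝ) := h1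
      _ = 0.48 ^ 2 * (C:ℝ) * ((B:ℝ)⁻¹ * (B:ℝ)) := by ring
      _ = 0.2304 * (C:ℝ) := by rw [h2]; norm_num
  have hBm : 4 * (B * m ^ 2) ≤ C := by
    have : (4 * (B * m ^ 2) : ℝ) ≤ C := by nlinarith
    exact_mod_cast this
  have hn2 : n ^ 2 ≤ m ^ 2 := by nlinarith
  have hBC0 : (0:ℤ) ≤ B * C := le_of_lt (mul_pos hB hC)
  -- bound on S*m
  have hSm : 2 * (S * m) ≤ C := by
    have h1 : A * C + 1 ≤ B * C := by nlinarith
    have h2 : (2 * (S * m)) ^ 2 ≤ C ^ 2 := by nlinarith [sq_nonneg m, sq_nonneg (S*m)]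
    nlinarith [mul_pos hS hm]
  -- bound on T*n
  have hTn : 2 * (T * n) ≤ C + 1 := by
    have h4m : 4 * m ^ 2 ≤ C := by nlinarith
    have e1 : (2 * (T * n)) ^ 2 = 4 * (B * C) * n ^ 2 + 4 * n ^ 2 := by
      linear_combination (-4 * n ^ 2 : ℤ) * hT2
    have e2 : (B * C) * n ^ 2 ≤ (B * C) * m ^ 2 := mul_le_mul_of_nonneg_left hn2 hBC0
    have e3 : C * (4 * (B * m ^ 2)) ≤ C * C := mul_le_mul_of_nonneg_left hBm hC.le
    have hCC : C ≤ C ^ 2 := by nlinarith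
    have h2 : (2 * (T * n)) ^ 2 ≤ (C + 1) ^ 2 := by
      rw [e1]
      have g1 : C * C ≤ C ^ 2 := by nlinarith
      have g2 : (C + 1) ^ 2 = C ^ 2 + 2 * C + 1 := by ring
      linarith
    nlinarith [mul_pos hT hn]
  have hAm : 4 * (A * m ^ 2) ≤ C := by nlinarith
  have hBn : 4 * (B * n ^ 2) ≤ C := by nlinarith [mul_le_mul_of_nonneg_left hn2 hB.le]
  have hAm0 : 0 ≤ A * m ^ 2 := by positivity
  have hBn0 : 0 ≤ B * n ^ 2 := by positivity
  have hSm0 : 0 < S * m := mul_pos hS hm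
  have hTn0 : 0 < T * n := mul_pos hT hn
  have hd : (4 * C) ∣ (B * n ^ 2 + lam * T * n - (A * m ^ 2 + lam * S * m)) :=
    Int.ModEq.dvd hcong
  have heq : B * n ^ 2 + lam * T * n - (A * m ^ 2 + lam * S * m) = 0 := by
    refine Int.eq_zero_of_abs_lt_dvd hd ?_
    rw [abs_lt]
    rcases hlam with h | h <;> subst h <;>
      exact ⟨by linarith, by linarith⟩
  exact ⟨by linarith, by linarith⟩
end
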